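/- Let 0 < q < 1, 0 < p_c ≤ 1, n ≥ 1 integer. The equilibrium reward function α*(p) = (σ(n − 1 + (1 − z(p))^n) − n(γ − η))/(2(1 − (1 − z(p))^n)), with z(p) = (1−q)p_c·p, is strictly decreasing in p on (0, 1] whenever σ(n−1) − n(γ−η) > 0 and σ > 0. -/
import Mathlib


theorem reward_strict_anti (q pc σ γ η : ℝ) (hq0 : 0 < q) (hq1 : q < 1)
    (hpc0 : 0 < pc) (hpc1 : pc ≤ 1) (n : ℕ) (hn : 1 ≤ n)
    (hσ : 0 < σ) (hnum : 0 < σ * ((n : ℝ) - 1) - (n : ℝ) * (γ - η)) :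
    StrictAntiOn (fun p : ℝ =>
        (σ * ((n : ℝ) - 1 + (1 - (1 - q) * pc * p) ^ n) - (n : ℝ) * (γ - η))
          / (2 * (1 - (1 - (1 - q) * pc * p) ^ n)))
      (Set.Ioc 0 1) := by
  intro a ha b hb hab
  simp only
  have hc0 : 0 < (1 - q) * pc := mul_pos (by linarith) hpc0
  have hlt : (1 - q) * pc * a < (1 - q) * pc * b := by
    exact mul_lt_mul_of_pos_left hab hc0
  have hzb : (1 - q) * pc * b ≤ 1 := by nlinarith [hb.2, ha.1]
  have h1b : 0 ≤ 1 - (1 - q) * pc * b := by linarith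
  have h1ab : 1 - (1 - q) * pc * b < 1 - (1 - q) * pc * a := by linarith
  have hwlt : (1 - (1 - q) * pc * b) ^ n < (1 - (1 - q) * pc * a) ^ n :=
    pow_lt_pow_left₀ h1ab h1b (by omega)
  have hwa1 : (1 - (1 - q) * pc * a) ^ n < 1 := by
    apply pow_lt_one₀ (by linarith) (by nlinarith [mul_pos hc0 ha.1]) (by omega)
  have hwb0 : 0 ≤ (1 - (1 - q) * pc * b) ^ n := pow_nonneg h1b n
  have hDa : 0 < 2 * (1 - (1 - (1 - q) * pc * a) ^ n) := by linarith
  have hDb : 0 < 2 * (1 - (1 - (1 - q) * pc * b) ^ n) := by linarith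
  rw [div_lt_div_iff₀ hDb hDa]
  nlinarith [hwlt, hnum, hσ, hwb0, hwa1]
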